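/- arXiv:2605.18106 — 2 statements merged into one kernel-verified Lean document; each statement's English description precedes it below -/
import Mathlib

section
/- Let E be a real inner product space, f : E → ℝ, and G : E → E such that f has gradient G(x) at every x ∈ E and G is Lipschitz with constant L > 0. Assume f⋆ ∈ ℝ satisfies f⋆ ≤ f(x) for all x ∈ E. Let T : E → E and 0 < c₁ ≤ c₂ satisfy c₁‖g‖² ≤ ⟪g, T(g)⟫ and ‖T(g)‖² ≤ c₂‖g‖² for all g ∈ E. Fix a constant step size γ with 0 < γ < 2c₁/(Lc₂), let W₀ ∈ E and define W_{k+1} := W_k − γ T(G(W_k)). Then for every positive integer T, ∑_{k=0}^{T−1} ‖G(W_k)‖² ≤ (f(W₀) − f⋆)/(γ(c₁ − Lc₂γ/2)), and consequently min_{0 ≤ k < T} ‖G(W_k)‖² ≤ (f(W₀) − f⋆)/(T γ (c₁ − Lc₂γ/2)). -/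
open scoped RealInnerProductSpace

lemma descent_lemma
    {E : Type*} [NormedAddCommGroup E] [InnerProductSpace ℝ E] [CompleteSpace E]
    (f : E → ℝ) (G : E → E) (L : ℝ) (hL : 0 < L)
    (hgrad : ∀ x, HasGradientAt f (G x) x)
    (hlip : ∀ x y, ‖G x - G y‖ ≤ L * ‖x - y‖)
    (x v : E) : f (x + v) ≤ f x + ⟪G x, v⟫ + L / 2 * ‖v‖ ^ 2 := by
  have hGcont : Continuous G := by
    have : LipschitzWith L.toNNReal G := by
      apply LipschitzWith.of_dist_le_mul
      intro a b
      simpa [dist_eq_norm, Real.coe_toNNReal _ hL.le] using hlip a b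
    exact this.continuous
  set φ : ℝ → ℝ := fun t => f (x + t • v) with hφ
  have hline : ∀ t : ℝ, HasDerivAt (fun s : ℝ => x + s • v) v t := by
    intro t
    have := ((hasDerivAt_id t).smul_const v).const_add x
    simpa using this
  have hφ' : ∀ t : ℝ, HasDerivAt φ ⟪G (x + t • v), v⟫ t := by
    intro t
    have h := ((hgrad (x + t • v)).hasFDerivAt).comp_hasDerivAt t (hline t)
    exact (by simpa [InnerProductSpace.toDual_apply_apply] using h :
      HasDerivAt (f ∘ fun s : ℝ => x + s • v) ⟪G (x + t • v), v⟫ t)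
  have hcont : Continuous fun t : ℝ => ⟪G (x + t • v), v⟫ := by
    exact (continuous_inner.comp (((hGcont.comp (by continuity)).prodMk continuous_const)))
  have hint : f (x + v) - f x = ∫ t in (0:ℝ)..1, ⟪G (x + t • v), v⟫ := by
    have := intervalIntegral.integral_eq_sub_of_hasDerivAt
      (f := φ) (f' := fun t => ⟪G (x + t • v), v⟫) (a := 0) (b := 1)
      (fun t _ => hφ' t) (hcont.intervalIntegrable 0 1)
    simp only [hφ] at this
    rw [this]; simp
  have hbound : ∫ t in (0:ℝ)..1, ⟪G (x + t • v), v⟫ ≤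
      ∫ t in (0:ℝ)..1, (⟪G x, v⟫ + L * t * ‖v‖ ^ 2) := by
    apply intervalIntegral.integral_mono_on (by norm_num)
      (hcont.intervalIntegrable 0 1)
      ((by continuity : Continuous fun t : ℝ => ⟪G x, v⟫ + L * t * ‖v‖ ^ 2).intervalIntegrable 0 1)
    intro t ht
    rcases ht with ⟨ht0, _⟩
    have : ⟪G (x + t • v), v⟫ - ⟪G x, v⟫ = ⟪G (x + t • v) - G x, v⟫ := by
      rw [inner_sub_left]
    have h1 : ⟪G (x + t • v) - G x, v⟫ ≤ ‖G (x + t • v) - G x‖ * ‖v‖ :=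
      real_inner_le_norm _ _
    have h2 : ‖G (x + t • v) - G x‖ ≤ L * (t * ‖v‖) := by
      have := hlip (x + t • v) x
      simpa [norm_smul, abs_of_nonneg ht0] using this
    nlinarith [norm_nonneg v, norm_nonneg (G (x + t • v) - G x)]
  have hval : ∫ t in (0:ℝ)..1, (⟪G x, v⟫ + L * t * ‖v‖ ^ 2) =
      ⟪G x, v⟫ + L / 2 * ‖v‖ ^ 2 := by
    rw [intervalIntegral.integral_add (continuous_const.intervalIntegrable 0 1)
      ((by continuity : Continuous fun t : ℝ => L * t * ‖v‖ ^ 2).intervalIntegrable 0 1)]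
    have h3 : ∫ t in (0:ℝ)..1, L * t * ‖v‖ ^ 2 = L / 2 * ‖v‖ ^ 2 := by
      have he : (fun t : ℝ => L * t * ‖v‖ ^ 2) = fun t : ℝ => (L * ‖v‖ ^ 2) * t := by
        funext t; ring
      rw [he, intervalIntegral.integral_const_mul, integral_id]; ring
    rw [h3]; simp
  linarith [hint ▸ hbound.trans hval.le]

/-- Sublinear convergence to stationarity: under `L`-Lipschitz
gradients, alignment/norm control constants `0 < c₁ ≤ c₂` for `T`, a lower bound
`f⋆` for `f`, and a constant step size `0 < γ < 2c₁/(Lc₂)`, the iterates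
`W_{k+1} = W_k − γ T(G(W_k))` satisfy
`∑_{k<T} ‖G(W_k)‖² ≤ (f(W₀) − f⋆)/(γ(c₁ − Lc₂γ/2))`, and hence the minimum of
`‖G(W_k)‖²` over `k < T` is at most `(f(W₀) − f⋆)/(Tγ(c₁ − Lc₂γ/2))`. -/
theorem sublinear_stationarity_spectral_optimizer
    {E : Type*} [NormedAddCommGroup E] [InnerProductSpace ℝ E] [CompleteSpace E]
    (f : E → ℝ) (G : E → E) (L : ℝ) (hL : 0 < L)
    (hgrad : ∀ x, HasGradientAt f (G x) x)
    (hlip : ∀ x y, ‖G x - G y‖ ≤ L * ‖x - y‖)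
    (fstar : ℝ) (hfstar : ∀ x, fstar ≤ f x)
    (T : E → E) (c₁ c₂ : ℝ) (hc₁ : 0 < c₁) (hc₁₂ : c₁ ≤ c₂)
    (halign : ∀ g : E, c₁ * ‖g‖ ^ 2 ≤ ⟪g, T g⟫)
    (hnorm : ∀ g : E, ‖T g‖ ^ 2 ≤ c₂ * ‖g‖ ^ 2)
    (γ : ℝ) (hγ0 : 0 < γ) (hγ : γ < 2 * c₁ / (L * c₂))
    (W : ℕ → E) (hrec : ∀ k : ℕ, W (k + 1) = W k - γ • T (G (W k))) :
    ∀ tt : ℕ, 0 < tt →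
      (∑ k ∈ Finset.range tt, ‖G (W k)‖ ^ 2) ≤
        (f (W 0) - fstar) / (γ * (c₁ - L * c₂ * γ / 2)) ∧
      ∃ k < tt, ‖G (W k)‖ ^ 2 ≤
        (f (W 0) - fstar) / (tt * γ * (c₁ - L * c₂ * γ / 2)) := by
  have hc₂ : 0 < c₂ := hc₁.trans_le hc₁₂
  have hγL : γ * (L * c₂) < 2 * c₁ := (lt_div_iff₀ (by positivity)).mp hγ
  set α : ℝ := γ * (c₁ - L * c₂ * γ / 2) with hα
  have hαpos : 0 < α := by
    apply mul_pos hγ0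
    nlinarith
  -- one-step descent
  have step : ∀ k : ℕ, f (W (k + 1)) + α * ‖G (W k)‖ ^ 2 ≤ f (W k) := by
    intro k
    set g := G (W k) with hg
    have hd := descent_lemma f G L hL hgrad hlip (W k) (-(γ • T g))
    have hW : W (k + 1) = W k + -(γ • T g) := by rw [hrec k]; abel
    rw [← hW] at hd
    have hi : ⟪g, -(γ • T g)⟫ = -(γ * ⟪g, T g⟫) := by
      rw [inner_neg_right, real_inner_smul_right]
    have hn : ‖-(γ • T g)‖ ^ 2 = γ ^ 2 * ‖T g‖ ^ 2 := by
      rw [norm_neg, norm_smul]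
      rw [Real.norm_eq_abs, abs_of_pos hγ0]; ring
    rw [hi, hn] at hd
    have e1 : γ * (c₁ * ‖g‖ ^ 2) ≤ γ * ⟪g, T g⟫ :=
      mul_le_mul_of_nonneg_left (halign g) hγ0.le
    have e2 : L / 2 * γ ^ 2 * ‖T g‖ ^ 2 ≤ L / 2 * γ ^ 2 * (c₂ * ‖g‖ ^ 2) :=
      mul_le_mul_of_nonneg_left (hnorm g) (by positivity)
    rw [hα]
    nlinarith [e1, e2, hd]
  -- telescoping sum
  have key : ∀ n : ℕ, α * ∑ k ∈ Finset.range n, ‖G (W k)‖ ^ 2 ≤ f (W 0) - f (W n) := by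
    intro n
    induction n with
    | zero => simp
    | succ n ih =>
      rw [Finset.sum_range_succ, mul_add]
      have := step n
      linarith
  intro tt htt
  have hsum : α * ∑ k ∈ Finset.range tt, ‖G (W k)‖ ^ 2 ≤ f (W 0) - fstar :=
    (key tt).trans (by linarith [hfstar (W tt)])
  constructor
  · rw [le_div_iff₀ hαpos]
    linarith [hsum]
  · obtain ⟨k, hk, hkmin⟩ := Finset.exists_min_image (Finset.range tt)
      (fun k => ‖G (W k)‖ ^ 2) ⟨0, Finset.mem_range.mpr htt⟩
    refine ⟨k, Finset.mem_range.mp hk, ?_⟩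
    have hcard : (tt : ℝ) * ‖G (W k)‖ ^ 2 ≤ ∑ j ∈ Finset.range tt, ‖G (W j)‖ ^ 2 := by
      calc (tt : ℝ) * ‖G (W k)‖ ^ 2 = ∑ _j ∈ Finset.range tt, ‖G (W k)‖ ^ 2 := by
            simp [mul_comm]
        _ ≤ ∑ j ∈ Finset.range tt, ‖G (W j)‖ ^ 2 := Finset.sum_le_sum fun j hj => hkmin j hj
    have httR : (0:ℝ) < tt := Nat.cast_pos.mpr htt
    rw [mul_assoc, le_div_iff₀ (by positivity : (0:ℝ) < (tt:ℝ) * α)]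
    nlinarith [mul_le_mul_of_nonneg_left hcard hαpos.le, hsum]
end

section
/- Let E be a real inner product space, f : E → ℝ, and G : E → E such that f has gradient G(x) at every x ∈ E and G is Lipschitz with constant L > 0. Let T : E → E and let W ∈ E be such that G(W) ≠ 0 and ⟪G(W), T(G(W))⟫ > 0, and set R := ⟪G(W), T(G(W))⟫ / ‖T(G(W))‖². Then for every γ > 0, f(W − γ T(G(W))) ≤ f(W) − (γ − Lγ²/(2R)) · ⟪G(W), T(G(W))⟫. In particular, if 0 < γ < 2R/L then f(W − γ T(G(W))) ≤ f(W). -/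
open scoped RealInnerProductSpace

private lemma descent_aux
    {E : Type*} [NormedAddCommGroup E] [InnerProductSpace ℝ E] [CompleteSpace E]
    (f : E → ℝ) (G : E → E) (L : ℝ) (hL : 0 ≤ L)
    (hgrad : ∀ x, HasGradientAt f (G x) x)
    (hlip : ∀ x y, ‖G x - G y‖ ≤ L * ‖x - y‖)
    (x v : E) :
    f (x + v) ≤ f x + ⟪G x, v⟫ + L / 2 * ‖v‖ ^ 2 := by
  set φ : ℝ → ℝ := fun t => f x + t * ⟪G x, v⟫ + L * t ^ 2 / 2 * ‖v‖ ^ 2 - f (x + t • v)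
    with hφ
  have hc : ∀ t : ℝ, HasDerivAt (fun t : ℝ => x + t • v) v t := by
    intro t
    simpa using ((hasDerivAt_id t).smul_const v).const_add x
  have hfd : ∀ t : ℝ, HasDerivAt (fun t : ℝ => f (x + t • v)) ⟪G (x + t • v), v⟫ t := by
    intro t
    have hF : HasFDerivAt f (InnerProductSpace.toDual ℝ E (G (x + t • v))) (x + t • v) :=
      hgrad (x + t • v)
    have h : HasDerivAt (fun t : ℝ => f (x + t • v))
        (InnerProductSpace.toDual ℝ E (G (x + t • v)) v) t := hF.comp_hasDerivAt t (hc t)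
    simpa using h
  have hφd : ∀ t : ℝ,
      HasDerivAt φ (⟪G x, v⟫ + L * t * ‖v‖ ^ 2 - ⟪G (x + t • v), v⟫) t := by
    intro t
    have h1 : HasDerivAt (fun t : ℝ => f x + t * ⟪G x, v⟫ + L * t ^ 2 / 2 * ‖v‖ ^ 2)
        (⟪G x, v⟫ + L * t * ‖v‖ ^ 2) t := by
      have := (((hasDerivAt_id t).mul_const ⟪G x, v⟫).const_add (f x)).add
        ((((hasDerivAt_id t).pow 2).const_mul L).div_const 2 |>.mul_const (‖v‖ ^ 2))
      have h2 : HasDerivAt (fun t : ℝ => f x + t * ⟪G x, v⟫ + L * t ^ 2 / 2 * ‖v‖ ^ 2) _ t := this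
      convert h2 using 1
      simp only [id_eq]
      ring
    exact h1.sub (hfd t)
  have hmono : MonotoneOn φ (Set.Icc (0:ℝ) 1) := by
    apply monotoneOn_of_deriv_nonneg (convex_Icc 0 1)
    · exact fun t _ => ((hφd t).continuousAt).continuousWithinAt
    · intro t _; exact (hφd t).differentiableAt.differentiableWithinAt
    · intro t ht
      rw [(hφd t).deriv]
      rw [interior_Icc] at ht
      have h2 : ⟪G (x + t • v) - G x, v⟫ ≤ L * t * ‖v‖ ^ 2 := by
        calc ⟪G (x + t • v) - G x, v⟫ ≤ ‖G (x + t • v) - G x‖ * ‖v‖ :=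
              real_inner_le_norm _ _
          _ ≤ (L * ‖(x + t • v) - x‖) * ‖v‖ := by
              gcongr; exact hlip _ _
          _ = L * (|t| * ‖v‖) * ‖v‖ := by
              rw [add_sub_cancel_left, norm_smul, Real.norm_eq_abs]
          _ = L * t * ‖v‖ ^ 2 := by
              rw [abs_of_pos ht.1]; ring
      have := inner_sub_left (𝕜 := ℝ) (G (x + t • v)) (G x) v
      linarith [this]
  have h01 := hmono (Set.left_mem_Icc.2 zero_le_one) (Set.right_mem_Icc.2 zero_le_one)
    zero_le_one
  simp only [hφ, zero_smul, add_zero, one_smul] at h01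
  nlinarith [h01]

/-- Descent lemma in ratio form: if `f` has an `L`-Lipschitz
gradient `G`, `G W ≠ 0`, `⟪G W, T (G W)⟫ > 0`, and
`R = ⟪G W, T (G W)⟫ / ‖T (G W)‖²` is the spectral advantage ratio, then for
every `γ > 0`, `f(W − γ T(G W)) ≤ f(W) − (γ − Lγ²/(2R)) ⟪G W, T (G W)⟫`;
in particular `f(W − γ T(G W)) ≤ f(W)` whenever `0 < γ < 2R/L`. -/
theorem descent_lemma_ratio_form
    {E : Type*} [NormedAddCommGroup E] [InnerProductSpace ℝ E] [CompleteSpace E]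
    (f : E → ℝ) (G : E → E) (L : ℝ) (hL : 0 < L)
    (hgrad : ∀ x, HasGradientAt f (G x) x)
    (hlip : ∀ x y, ‖G x - G y‖ ≤ L * ‖x - y‖)
    (T : E → E) (W : E)
    (hGW : G W ≠ 0) (hpos : 0 < ⟪G W, T (G W)⟫)
    (R : ℝ) (hR : R = ⟪G W, T (G W)⟫ / ‖T (G W)‖ ^ 2) :
    ∀ γ : ℝ, 0 < γ →
      f (W - γ • T (G W)) ≤ f W - (γ - L * γ ^ 2 / (2 * R)) * ⟪G W, T (G W)⟫ ∧
      (γ < 2 * R / L → f (W - γ • T (G W)) ≤ f W) := by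
  intro γ hγ
  set p : ℝ := ⟪G W, T (G W)⟫ with hp
  have hT : T (G W) ≠ 0 := by
    intro h; rw [hp, h, inner_zero_right] at hpos; exact lt_irrefl 0 hpos
  have hTn : (0:ℝ) < ‖T (G W)‖ ^ 2 := pow_pos (norm_pos_iff.2 hT) 2
  have hRpos : 0 < R := by rw [hR]; exact div_pos hpos hTn
  have key := descent_aux f G L hL.le hgrad hlip W (-(γ • T (G W)))
  have hinner : ⟪G W, -(γ • T (G W))⟫ = -(γ * p) := by
    rw [inner_neg_right, real_inner_smul_right]
  have hnorm : ‖-(γ • T (G W))‖ ^ 2 = γ ^ 2 * ‖T (G W)‖ ^ 2 := by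
    rw [norm_neg, norm_smul, mul_pow, Real.norm_eq_abs, sq_abs]
  rw [hinner, hnorm] at key
  have hsub : W + -(γ • T (G W)) = W - γ • T (G W) := by abel
  rw [hsub] at key
  have hRid : L * γ ^ 2 / (2 * R) * p = L / 2 * (γ ^ 2 * ‖T (G W)‖ ^ 2) := by
    rw [hR]; field_simp
  have hmain : f (W - γ • T (G W)) ≤ f W - (γ - L * γ ^ 2 / (2 * R)) * p := by
    have : f W - (γ - L * γ ^ 2 / (2 * R)) * p
        = f W + -(γ * p) + L * γ ^ 2 / (2 * R) * p := by ring
    rw [this, hRid]; exact key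
  refine ⟨hmain, fun hγ2 => ?_⟩
  have hcoef : 0 ≤ γ - L * γ ^ 2 / (2 * R) := by
    have h1 : L * γ < 2 * R := by
      have := (lt_div_iff₀ hL).mp hγ2
      nlinarith
    rw [sub_nonneg, div_le_iff₀ (by positivity)]
    nlinarith
  have : 0 ≤ (γ - L * γ ^ 2 / (2 * R)) * p := mul_nonneg hcoef hpos.le
  linarith [hmain]
end
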